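/- (Sufficiency in the characterization of Kähler rigidity.) Let B, ω ∈ Λ_ℝ with b(ω,ω) > 0, and set Re φ = (1, B, ½(b(B,B) − b(ω,ω))) and Im φ = (0, ω, b(B,ω)) in M_ℝ. If B lies in the image of Λ_ℚ in Λ_ℝ, and ω = κ·H for some κ ∈ ℝ and H ∈ Λ, and b(ω,ω) ∈ ℚ, then there exists a ℤ-submodule L ⊆ M of rank 2 whose ℝ-span contains both Re φ and Im φ. -/

import Mathlib

noncomputable section

open Matrix in
/-- The ℝ-bilinear extension to `Λ_ℝ = ℝⁿ` of the integral symmetric bilinear form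
on `Λ = ℤⁿ` with Gram matrix `G`. -/
def bR {n : ℕ} (G : Matrix (Fin n) (Fin n) ℤ) (x y : Fin n → ℝ) : ℝ :=
  x ⬝ᵥ (G.map (Int.cast : ℤ → ℝ)).mulVec y

/-- The canonical map `Λ = ℤⁿ → Λ_ℝ = ℝⁿ`. -/
def intCast {n : ℕ} (v : Fin n → ℤ) : Fin n → ℝ := fun i => (v i : ℝ)

/-- The Mukai lattice `M = ℤ × Λ × ℤ` viewed inside `M_ℝ = ℝ × Λ_ℝ × ℝ`. -/
def Mset (n : ℕ) : Set (ℝ × (Fin n → ℝ) × ℝ) :=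
  {w | ∃ (a c : ℤ) (x : Fin n → ℤ), w = ((a : ℝ), intCast x, (c : ℝ))}

/-!
Sufficiency in the characterization of Kähler rigidity.  Let `B, ω ∈ Λ_ℝ` with
`b(ω,ω) > 0`, and set `Re φ = (1, B, ½(b(B,B) − b(ω,ω)))`, `Im φ = (0, ω, b(B,ω))`.
If `B` is rational, `ω = κ·H` for some `κ ∈ ℝ` and integral `H`, and `b(ω,ω) ∈ ℚ`,
then there is a rank-2 ℤ-submodule `L ⊆ M` whose ℝ-span contains `Re φ` and `Im φ`.
-/

open Matrix in
def bQ {n : ℕ} (G : Matrix (Fin n) (Fin n) ℤ) (x y : Fin n → ℚ) : ℚ :=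
  x ⬝ᵥ (G.map (Int.cast : ℤ → ℚ)).mulVec y

lemma bR_cast {n : ℕ} (G : Matrix (Fin n) (Fin n) ℤ) (x y : Fin n → ℚ) :
    bR G (fun i => (x i : ℝ)) (fun i => (y i : ℝ)) = ((bQ G x y : ℚ) : ℝ) := by
  simp only [bR, bQ, dotProduct, Matrix.mulVec, Matrix.map_apply]
  push_cast
  ring

lemma bR_smul_right {n : ℕ} (G : Matrix (Fin n) (Fin n) ℤ) (x y : Fin n → ℝ) (c : ℝ) :
    bR G x (c • y) = c * bR G x y := by
  simp only [bR, dotProduct, Matrix.mulVec, Pi.smul_apply, smul_eq_mul,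
    Finset.mul_sum]
  refine Finset.sum_congr rfl fun i _ => ?_
  refine Finset.sum_congr rfl fun j _ => ?_
  ring

lemma rat_clear (q : ℚ) (k : ℤ) (h : (q.den : ℤ) ∣ k) : ∃ m : ℤ, (m : ℚ) = q * k := by
  obtain ⟨c, rfl⟩ := h
  refine ⟨q.num * c, ?_⟩
  have h1 : q * (q.den : ℚ) = (q.num : ℚ) := by
    have hd : (q.den : ℚ) ≠ 0 := by exact_mod_cast q.den_nz
    nth_rw 1 [← Rat.num_div_den q]
    rw [div_mul_cancel₀ _ hd]
  push_cast
  rw [← mul_assoc, h1]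

def Msub (n : ℕ) : Submodule ℤ (ℝ × (Fin n → ℝ) × ℝ) where
  carrier := Mset n
  zero_mem' := ⟨0, 0, 0, by
    refine Prod.ext (by simp) (Prod.ext ?_ (by simp))
    funext i; simp [intCast]⟩
  add_mem' := by
    rintro _ _ ⟨a, c, x, rfl⟩ ⟨a', c', x', rfl⟩
    refine ⟨a + a', c + c', x + x', ?_⟩
    refine Prod.ext (by push_cast; rfl) (Prod.ext ?_ (by push_cast; rfl))
    funext i; simp [intCast]
  smul_mem' := by
    rintro z _ ⟨a, c, x, rfl⟩
    refine ⟨z * a, z * c, z • x, ?_⟩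
    refine Prod.ext ?_ (Prod.ext ?_ ?_)
    · show z • (a : ℝ) = _; push_cast [zsmul_eq_mul]; ring
    · funext i
      show z • ((intCast x) i) = _
      simp [intCast, zsmul_eq_mul]
    · show z • (c : ℝ) = _; push_cast [zsmul_eq_mul]; ring

theorem kahler_rigid_sufficiency
    {n : ℕ} (G : Matrix (Fin n) (Fin n) ℤ) (hG : G.IsSymm)
    (B ω : Fin n → ℝ) (hω : 0 < bR G ω ω)
    (hB : ∃ q : Fin n → ℚ, B = fun i => (q i : ℝ))
    (hωH : ∃ (κ : ℝ) (H : Fin n → ℤ), ω = κ • intCast H)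
    (hωω : ∃ q : ℚ, bR G ω ω = (q : ℝ)) :
    ∃ L : Submodule ℤ (ℝ × (Fin n → ℝ) × ℝ),
      (L : Set (ℝ × (Fin n → ℝ) × ℝ)) ⊆ Mset n ∧
      Module.finrank ℤ L = 2 ∧
      ((1 : ℝ), B, (bR G B B - bR G ω ω) / 2)
        ∈ Submodule.span ℝ (L : Set (ℝ × (Fin n → ℝ) × ℝ)) ∧
      ((0 : ℝ), ω, bR G B ω)
        ∈ Submodule.span ℝ (L : Set (ℝ × (Fin n → ℝ) × ℝ)) := by
  obtain ⟨q, hBq⟩ := hB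
  obtain ⟨κ, H, hωκ⟩ := hωH
  obtain ⟨q₀, hq0⟩ := hωω
  -- nonvanishing of H
  have hωne : ω ≠ 0 := by
    intro h
    rw [h] at hω
    simp [bR] at hω
  have hHne : H ≠ 0 := by
    intro h
    apply hωne
    rw [hωκ, h]
    funext i
    simp [intCast]
  obtain ⟨j, hj⟩ : ∃ j, H j ≠ 0 := Function.ne_iff.mp hHne
  -- rational data
  set r₁ : ℚ := (bQ G q q - q₀) / 2 with hr₁
  set d₁ : ℤ := (r₁.den : ℤ) * ∏ i, ((q i).den : ℤ) with hd₁
  have hd₁pos : 0 < d₁ := by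
    apply mul_pos
    · exact_mod_cast r₁.pos
    · exact Finset.prod_pos fun i _ => by exact_mod_cast (q i).pos
  have hd₁ne : (d₁ : ℝ) ≠ 0 := by exact_mod_cast hd₁pos.ne'
  have hdvd1 : (r₁.den : ℤ) ∣ d₁ := Dvd.intro _ rfl
  have hdvdq : ∀ i, ((q i).den : ℤ) ∣ d₁ :=
    fun i => ((Finset.dvd_prod_of_mem _ (Finset.mem_univ i))).mul_left _
  obtain ⟨m₁c, hm₁c⟩ := rat_clear r₁ d₁ hdvd1
  choose x hx using fun i => rat_clear (q i) d₁ (hdvdq i)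
  set r₂ : ℚ := bQ G q (fun i => (H i : ℚ)) with hr₂
  set d₂ : ℤ := (r₂.den : ℤ) with hd₂
  have hd₂pos : 0 < d₂ := by rw [hd₂]; exact_mod_cast r₂.pos
  have hd₂ne : (d₂ : ℝ) ≠ 0 := by exact_mod_cast hd₂pos.ne'
  obtain ⟨m₂c, hm₂c⟩ := rat_clear r₂ d₂ dvd_rfl
  -- the two lattice vectors
  set m₁ : ℝ × (Fin n → ℝ) × ℝ := ((d₁ : ℝ), intCast x, (m₁c : ℝ)) with hm₁
  set m₂ : ℝ × (Fin n → ℝ) × ℝ := ((0 : ℝ), intCast (d₂ • H), (m₂c : ℝ)) with hm₂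
  -- key real identities
  have hBB : bR G B B = ((bQ G q q : ℚ) : ℝ) := by rw [hBq]; exact bR_cast G q q
  have hintH : intCast H = fun i => (((H i : ℚ) : ℝ)) := by
    funext i; simp [intCast]
  have hBH : bR G B (intCast H) = ((r₂ : ℚ) : ℝ) := by
    rw [hBq, hintH, hr₂]; exact bR_cast G q _
  have hBω : bR G B ω = κ * ((r₂ : ℚ) : ℝ) := by
    rw [hωκ, bR_smul_right, hBH]
  have hxR : ∀ i, ((x i : ℝ)) = ((q i : ℚ) : ℝ) * (d₁ : ℝ) := by
    intro i; exact_mod_cast congrArg (Rat.cast : ℚ → ℝ) (hx i)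
  have hm₁cR : ((m₁c : ℝ)) = ((r₁ : ℚ) : ℝ) * (d₁ : ℝ) := by
    exact_mod_cast congrArg (Rat.cast : ℚ → ℝ) hm₁c
  have hm₂cR : ((m₂c : ℝ)) = ((r₂ : ℚ) : ℝ) * (d₂ : ℝ) := by
    exact_mod_cast congrArg (Rat.cast : ℚ → ℝ) hm₂c
  -- the lattice
  refine ⟨Submodule.span ℤ (Set.range ![m₁, m₂]), ?_, ?_, ?_, ?_⟩
  · -- contained in Mset
    intro v hv
    have hsub : Set.range ![m₁, m₂] ⊆ (Msub n : Set _) := by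
      rw [Set.range_subset_iff]
      intro i
      fin_cases i
      · exact ⟨d₁, m₁c, x, rfl⟩
      · refine ⟨0, m₂c, d₂ • H, ?_⟩
        rw [hm₂]
        refine Prod.ext (by norm_num) (Prod.ext ?_ rfl)
        funext i
        simp [intCast, zsmul_eq_mul]
    exact (Submodule.span_le.mpr hsub) hv
  · -- rank 2
    have li : LinearIndependent ℤ ![m₁, m₂] := by
      rw [LinearIndependent.pair_iff]
      intro s t hst
      have h1 : s • (d₁ : ℝ) + t • (0 : ℝ) = 0 := congrArg Prod.fst hst
      have hs : s = 0 := by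
        have : (s : ℝ) * (d₁ : ℝ) = 0 := by
          simpa [zsmul_eq_mul] using h1
        exact_mod_cast (mul_eq_zero.mp this).resolve_right hd₁ne
      subst hs
      have h2 : (0 : ℤ) • (x j : ℝ) + t • ((d₂ * H j : ℤ) : ℝ) = 0 := by
        have := congrArg (fun w => w.2.1 j) hst
        simpa [hm₂, intCast, Pi.smul_apply] using this
      have ht : (t : ℝ) * ((d₂ : ℝ) * (H j : ℝ)) = 0 := by
        simpa [zsmul_eq_mul] using h2
      have hHjne : ((H j : ℝ)) ≠ 0 := by exact_mod_cast hj
      have := (mul_eq_zero.mp ht).resolve_right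
        (mul_ne_zero hd₂ne hHjne)
      exact ⟨rfl, by exact_mod_cast this⟩
    have bas := Module.Basis.span li
    rw [Module.finrank_eq_card_basis bas]
    simp
  · -- Re φ in real span
    have hm₁L : m₁ ∈ Submodule.span ℝ
        ((Submodule.span ℤ (Set.range ![m₁, m₂]) : Submodule ℤ _) : Set _) :=
      Submodule.subset_span (Submodule.subset_span ⟨0, rfl⟩)
    have : ((1 : ℝ), B, (bR G B B - bR G ω ω) / 2) = ((d₁ : ℝ))⁻¹ • m₁ := by
      rw [hm₁]
      refine Prod.ext ?_ (Prod.ext ?_ ?_)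
      · show (1 : ℝ) = (d₁ : ℝ)⁻¹ * (d₁ : ℝ)
        rw [inv_mul_cancel₀ hd₁ne]
      · funext i
        show B i = (d₁ : ℝ)⁻¹ * (x i : ℝ)
        rw [hxR i, hBq]
        field_simp
      · show (bR G B B - bR G ω ω) / 2 = (d₁ : ℝ)⁻¹ * (m₁c : ℝ)
        rw [hm₁cR, hBB, hq0, hr₁]
        push_cast
        field_simp
    rw [this]
    exact Submodule.smul_mem _ _ hm₁L
  · -- Im φ in real span
    have hm₂L : m₂ ∈ Submodule.span ℝ
        ((Submodule.span ℤ (Set.range ![m₁, m₂]) : Submodule ℤ _) : Set _) :=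
      Submodule.subset_span (Submodule.subset_span ⟨1, rfl⟩)
    have : ((0 : ℝ), ω, bR G B ω) = (κ * (d₂ : ℝ)⁻¹) • m₂ := by
      rw [hm₂]
      refine Prod.ext ?_ (Prod.ext ?_ ?_)
      · show (0 : ℝ) = κ * (d₂ : ℝ)⁻¹ * 0
        ring
      · funext i
        show ω i = κ * (d₂ : ℝ)⁻¹ * ((d₂ * H i : ℤ) : ℝ)
        rw [hωκ]
        simp only [Pi.smul_apply, smul_eq_mul, intCast]
        push_cast
        field_simp
      · show bR G B ω = κ * (d₂ : ℝ)⁻¹ * (m₂c : ℝ)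
        rw [hm₂cR, hBω]
        field_simp
    rw [this]
    exact Submodule.smul_mem _ _ hm₂L
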